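/- Let R be a Noetherian domain, I a nonzero ideal, and r in R. If r satisfies a monic polynomial x^d + c_1 x^{d-1} + ... + c_d with c_j in I^{j+1} for all 1 ≤ j ≤ d, then for every injective ring homomorphism from R to a discrete valuation ring V with IV ≠ 0 and IV ≠ V, the order of r in V is strictly greater than the order of IV. -/

import Mathlib

open IsDiscreteValuationRing

lemma mem_maxIdeal_pow_iff {V : Type*} [CommRing V] [IsDomain V] [IsDiscreteValuationRing V]
    (x : V) (n : ℕ) :
    x ∈ IsLocalRing.maximalIdeal V ^ n ↔ (n : ℕ∞) ≤ addVal V x := by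
  obtain ⟨ϖ, hϖ⟩ := IsDiscreteValuationRing.exists_irreducible V
  rw [hϖ.maximalIdeal_eq, Ideal.span_singleton_pow, Ideal.mem_span_singleton,
    ← addVal_le_iff_dvd, hϖ.addVal_pow]

lemma addVal_neg' {V : Type*} [CommRing V] [IsDomain V] [IsDiscreteValuationRing V]
    (x : V) : addVal V (-x) = addVal V x := by
  have h1 : addVal V (-1 : V) + addVal V (-1 : V) = 0 := by
    rw [← addVal_mul]
    norm_num [addVal_one]
  have h2 : addVal V (-1 : V) = 0 := (add_eq_zero.mp h1).1
  rw [neg_eq_neg_one_mul, addVal_mul, h2, zero_add]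

/-- If `r` satisfies a monic polynomial `x^d + c_1 x^{d-1} + ... + c_d` with
`c_j ∈ I^{j+1}`, then for every injective map to a DVR `V` with `IV ≠ 0` and `IV ≠ V`,
the order of `r` is strictly greater than the order of `IV` (expressed via the
power of the maximal ideal with `I.map φ = m^k`). -/
theorem stmt1 {R : Type*} [CommRing R] [IsDomain R] [IsNoetherianRing R]
    (I : Ideal R) (hI : I ≠ ⊥) (r : R)
    (d : ℕ) (hd : 0 < d) (c : ℕ → R)
    (hc : ∀ j, 1 ≤ j → j ≤ d → c j ∈ I ^ (j + 1))
    (heq : r ^ d + ∑ j ∈ Finset.Icc 1 d, c j * r ^ (d - j) = 0)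
    (V : Type*) [CommRing V] [IsDomain V] [IsDiscreteValuationRing V]
    (φ : R →+* V) (hφ : Function.Injective φ)
    (h0 : I.map φ ≠ ⊥) (h1 : I.map φ ≠ ⊤)
    (k : ℕ) (hk : I.map φ = IsLocalRing.maximalIdeal V ^ k) :
    φ r ∈ IsLocalRing.maximalIdeal V ^ (k + 1) := by
  have hk1 : 1 ≤ k := by
    by_contra h
    interval_cases k
    simp at hk
    exact h1 hk
  rw [mem_maxIdeal_pow_iff]
  by_contra hlt
  push_neg at hlt
  -- hlt : addVal V (φ r) < k + 1, so it's finite and ≤ k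
  have hne : addVal V (φ r) ≠ ⊤ := by
    intro h; rw [h] at hlt; exact not_top_lt hlt
  obtain ⟨m, hm0⟩ := WithTop.ne_top_iff_exists.mp hne
  have hm : ((m : ℕ) : ℕ∞) = addVal V (φ r) := by exact_mod_cast hm0
  have hmk : m ≤ k := by
    rw [← hm] at hlt
    have : m < k + 1 := Nat.cast_lt.mp hlt
    omega
  -- image of the equation
  have heq' : φ r ^ d + ∑ j ∈ Finset.Icc 1 d, φ (c j) * φ r ^ (d - j) = 0 := by
    have := congrArg φ heq
    simpa [map_add, map_sum, map_mul, map_pow] using this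
  have hsum : φ r ^ d = - ∑ j ∈ Finset.Icc 1 d, φ (c j) * φ r ^ (d - j) := by
    linear_combination heq'
  -- valuation of c j
  have hcj : ∀ j ∈ Finset.Icc 1 d, ((k * (j + 1) : ℕ) : ℕ∞) ≤ addVal V (φ (c j)) := by
    intro j hj
    simp only [Finset.mem_Icc] at hj
    have : φ (c j) ∈ (IsLocalRing.maximalIdeal V ^ k) ^ (j + 1) := by
      rw [← hk, ← Ideal.map_pow]
      exact Ideal.mem_map_of_mem φ (hc j hj.1 hj.2)
    rw [← pow_mul] at this
    exact (mem_maxIdeal_pow_iff _ _).mp this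
  -- key bound for each term
  have hterm : ∀ j ∈ Finset.Icc 1 d, ((d * m + 1 : ℕ) : ℕ∞) ≤
      addVal V (φ (c j) * φ r ^ (d - j)) := by
    intro j hj
    have hj' := Finset.mem_Icc.mp hj
    rw [addVal_mul, addVal_pow, ← hm]
    have hsm : (d - j) • ((m : ℕ∞)) = (((d - j) * m : ℕ) : ℕ∞) := by
      rw [nsmul_eq_mul, ← Nat.cast_mul]
    rw [hsm]
    have hnat : d * m + 1 ≤ k * (j + 1) + (d - j) * m := by
      have e1 : k * (j + 1) = j * k + k := by ring
      have e2 : d * m = (d - j) * m + j * m := by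
        have h3 : d - j + j = d := Nat.sub_add_cancel hj'.2
        calc d * m = (d - j + j) * m := by rw [h3]
          _ = (d - j) * m + j * m := add_mul _ _ _
      have h4 : j * m ≤ j * k := Nat.mul_le_mul_left _ hmk
      linarith
    calc ((d * m + 1 : ℕ) : ℕ∞) ≤ ((k * (j + 1) + (d - j) * m : ℕ) : ℕ∞) := by
          exact_mod_cast hnat
      _ = ((k * (j + 1) : ℕ) : ℕ∞) + (((d - j) * m : ℕ) : ℕ∞) := by push_cast; rfl
      _ ≤ addVal V (φ (c j)) + (((d - j) * m : ℕ) : ℕ∞) :=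
          add_le_add_left (hcj j hj) _
  -- contradiction
  have hv : addVal V (φ r ^ d) = ((d * m : ℕ) : ℕ∞) := by
    rw [addVal_pow, ← hm, nsmul_eq_mul, ← Nat.cast_mul]
  have : ((d * m + 1 : ℕ) : ℕ∞) ≤ addVal V (φ r ^ d) := by
    rw [hsum, addVal_neg']
    exact (addVal V).map_le_sum hterm
  rw [hv, Nat.cast_le] at this
  omega
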